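/- The excitation-state of a connected graph G is separable across some bipartition of its vertices if and only if G is a complete bipartite graph K_{V_1,V_2}; in that case |G⟩ = |W⟩_{V_1} ⊗ |W⟩_{V_2}, a tensor product of two W states. -/

import Mathlib

open scoped BigOperators

/-- Pure (unnormalized) states of `N` qubits in the computational basis. -/
abbrev QState (N : ℕ) := (Fin N → Fin 2) → ℂ

/-- The excitation-state `|G⟩ = (1/√|E|) Σ_{{v,w} ∈ E} |e_v + e_w⟩` of a graph. -/
noncomputable def graphState {N : ℕ} (G : SimpleGraph (Fin N)) [DecidableRel G.Adj] :
    QState N :=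
  fun x => ((Real.sqrt G.edgeFinset.card : ℂ))⁻¹ *
    ∑ e ∈ G.edgeFinset, if x = (fun i => if i ∈ e then 1 else 0) then 1 else 0

/-- The `W` state on the qubits indexed by `S` (as an amplitude function of the
coordinates in `S`): the normalized uniform superposition of the configurations
with exactly one `1` inside `S`. -/
noncomputable def wOn {N : ℕ} (S : Finset (Fin N)) : QState N :=
  fun x => if (S.filter (fun i => x i = 1)).card = 1 then ((Real.sqrt S.card : ℂ))⁻¹ else 0

/-- `ψ` factorizes (is separable) across the bipartition `S | Sᶜ` of qubits. -/
def FactorizesAcross {N : ℕ} (ψ : QState N) (S : Finset (Fin N)) : Prop :=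
  ∃ φ₁ φ₂ : QState N,
    (∀ x y : Fin N → Fin 2, (∀ i ∈ S, x i = y i) → φ₁ x = φ₁ y) ∧
    (∀ x y : Fin N → Fin 2, (∀ i ∉ S, x i = y i) → φ₂ x = φ₂ y) ∧
    (∀ x, ψ x = φ₁ x * φ₂ x)

/-- `G` is the complete bipartite graph with parts `S` and `Sᶜ`. -/
def IsCompleteBipartiteOn {N : ℕ} (G : SimpleGraph (Fin N)) (S : Finset (Fin N)) : Prop :=
  ∀ v w, G.Adj v w ↔ ((v ∈ S ∧ w ∉ S) ∨ (v ∉ S ∧ w ∈ S))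

namespace Stmt7Aux
variable {N : ℕ}

def indic (e : Sym2 (Fin N)) : Fin N → Fin 2 := fun i => if i ∈ e then 1 else 0

lemma indic_eq_one_iff {e : Sym2 (Fin N)} {i : Fin N} : indic e i = 1 ↔ i ∈ e := by
  unfold indic; split <;> simp_all

lemma indic_inj : Function.Injective (indic (N := N)) := by
  intro e e' h
  exact Sym2.ext fun z => by rw [← indic_eq_one_iff, ← indic_eq_one_iff, h]

lemma graphState_eq (G : SimpleGraph (Fin N)) [DecidableRel G.Adj] (x : Fin N → Fin 2) :
    graphState G x = ((Real.sqrt G.edgeFinset.card : ℂ))⁻¹ *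
      ∑ e ∈ G.edgeFinset, if x = indic e then 1 else 0 := rfl

lemma graphState_indic (G : SimpleGraph (Fin N)) [DecidableRel G.Adj] {e : Sym2 (Fin N)}
    (he : e ∈ G.edgeFinset) :
    graphState G (indic e) = ((Real.sqrt G.edgeFinset.card : ℂ))⁻¹ := by
  rw [graphState_eq]
  have : ∑ e' ∈ G.edgeFinset, (if indic e = indic e' then (1:ℂ) else 0) = 1 := by
    simp only [indic_inj.eq_iff]
    rw [Finset.sum_ite_eq]
    simp [he]
  rw [this, mul_one]

lemma graphState_eq_zero (G : SimpleGraph (Fin N)) [DecidableRel G.Adj] {x : Fin N → Fin 2}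
    (h : ∀ e ∈ G.edgeFinset, x ≠ indic e) : graphState G x = 0 := by
  rw [graphState_eq]
  rw [Finset.sum_eq_zero (fun e he => by rw [if_neg (h e he)]), mul_zero]

lemma exists_of_ne_zero (G : SimpleGraph (Fin N)) [DecidableRel G.Adj] {x : Fin N → Fin 2}
    (h : graphState G x ≠ 0) : ∃ e ∈ G.edgeFinset, x = indic e := by
  by_contra hc
  push_neg at hc
  exact h (graphState_eq_zero G hc)

lemma sqrt_inv_ne_zero (G : SimpleGraph (Fin N)) [DecidableRel G.Adj]
    (hE : G.edgeFinset.Nonempty) : ((Real.sqrt G.edgeFinset.card : ℂ))⁻¹ ≠ 0 := by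
  have h1 : (0:ℝ) < Real.sqrt G.edgeFinset.card := by
    apply Real.sqrt_pos.mpr
    exact_mod_cast Finset.card_pos.mpr hE
  apply inv_ne_zero
  exact_mod_cast ne_of_gt h1

lemma eq_indic_iff {x : Fin N → Fin 2} {e : Sym2 (Fin N)} :
    x = indic e ↔ ∀ i, (x i = 1 ↔ i ∈ e) := by
  constructor
  · rintro rfl i; exact indic_eq_one_iff
  · intro h; funext i
    by_cases hi : i ∈ e
    · rw [(h i).mpr hi, indic_eq_one_iff.mpr hi]
    · have h1 : x i ≠ 1 := fun hx => hi ((h i).mp hx)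
      have h2 : indic e i ≠ 1 := fun hx => hi (indic_eq_one_iff.mp hx)
      omega

variable {G : SimpleGraph (Fin N)} [DecidableRel G.Adj] {S : Finset (Fin N)}

lemma mem_edgeFinset_iff (hbip : IsCompleteBipartiteOn G S) {e : Sym2 (Fin N)} :
    e ∈ G.edgeFinset ↔ ∃ v ∈ S, ∃ w ∈ Sᶜ, e = s(v,w) := by
  induction e using Sym2.ind with
  | _ a b =>
    rw [SimpleGraph.mem_edgeFinset, SimpleGraph.mem_edgeSet, hbip]
    constructor
    · rintro (⟨ha, hb⟩ | ⟨ha, hb⟩)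
      · exact ⟨a, ha, b, Finset.mem_compl.mpr hb, rfl⟩
      · exact ⟨b, hb, a, Finset.mem_compl.mpr ha, Sym2.eq_swap⟩
    · rintro ⟨v, hv, w, hw, hvw⟩
      have hw' := Finset.mem_compl.mp hw
      rcases Sym2.eq_iff.mp hvw with ⟨rfl, rfl⟩ | ⟨rfl, rfl⟩
      · exact Or.inl ⟨hv, hw'⟩
      · exact Or.inr ⟨hw', hv⟩

lemma card_edges (hbip : IsCompleteBipartiteOn G S) :
    G.edgeFinset.card = S.card * Sᶜ.card := by
  rw [← Finset.card_product]
  symm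
  apply Finset.card_bij (s := S ×ˢ Sᶜ) (t := G.edgeFinset) (fun p _ => s(p.1, p.2))
  · rintro ⟨v, w⟩ hp
    rw [Finset.mem_product] at hp
    exact (mem_edgeFinset_iff hbip).mpr ⟨v, hp.1, w, hp.2, rfl⟩
  · rintro ⟨v, w⟩ hp ⟨v', w'⟩ hp' h
    rw [Finset.mem_product] at hp hp'
    rcases Sym2.eq_iff.mp h with ⟨rfl, rfl⟩ | ⟨rfl, rfl⟩
    · rfl
    · exact absurd hp.1 (Finset.mem_compl.mp hp'.2)
  · intro e he
    obtain ⟨v, hv, w, hw, rfl⟩ := (mem_edgeFinset_iff hbip).mp he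
    exact ⟨(v, w), Finset.mem_product.mpr ⟨hv, hw⟩, rfl⟩

lemma filter_eq_singleton {x : Fin N → Fin 2} {v w : Fin N} (hv : v ∈ S) (hw : w ∈ Sᶜ)
    (hx : x = indic s(v,w)) :
    S.filter (fun i => x i = 1) = {v} ∧ (Sᶜ).filter (fun i => x i = 1) = {w} := by
  have hw' : w ∉ S := Finset.mem_compl.mp hw
  have hones : ∀ i, x i = 1 ↔ (i = v ∨ i = w) := by
    intro i; rw [eq_indic_iff.mp hx i, Sym2.mem_iff]
  constructor
  · ext i
    simp only [Finset.mem_filter, Finset.mem_singleton, hones]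
    constructor
    · rintro ⟨hi, rfl | rfl⟩
      · rfl
      · exact absurd hi hw'
    · rintro rfl; exact ⟨hv, Or.inl rfl⟩
  · ext i
    simp only [Finset.mem_filter, Finset.mem_singleton, hones, Finset.mem_compl]
    constructor
    · rintro ⟨hi, rfl | rfl⟩
      · exact absurd hv hi
      · rfl
    · rintro rfl; exact ⟨hw', Or.inr rfl⟩

lemma exists_of_cards {x : Fin N → Fin 2}
    (h1 : (S.filter (fun i => x i = 1)).card = 1)
    (h2 : ((Sᶜ).filter (fun i => x i = 1)).card = 1) :
    ∃ v ∈ S, ∃ w ∈ Sᶜ, x = indic s(v,w) := by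
  obtain ⟨v, hv⟩ := Finset.card_eq_one.mp h1
  obtain ⟨w, hw⟩ := Finset.card_eq_one.mp h2
  have hvS : v ∈ S ∧ x v = 1 := by
    have : v ∈ S.filter (fun i => x i = 1) := hv ▸ Finset.mem_singleton_self v
    simpa using this
  have hwS : w ∈ Sᶜ ∧ x w = 1 := by
    have : w ∈ (Sᶜ).filter (fun i => x i = 1) := hw ▸ Finset.mem_singleton_self w
    simpa using this
  refine ⟨v, hvS.1, w, hwS.1, eq_indic_iff.mpr fun i => ?_⟩
  rw [Sym2.mem_iff]
  constructor
  · intro hi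
    by_cases hiS : i ∈ S
    · have : i ∈ S.filter (fun j => x j = 1) := Finset.mem_filter.mpr ⟨hiS, hi⟩
      rw [hv, Finset.mem_singleton] at this
      exact Or.inl this
    · have : i ∈ (Sᶜ).filter (fun j => x j = 1) :=
        Finset.mem_filter.mpr ⟨Finset.mem_compl.mpr hiS, hi⟩
      rw [hw, Finset.mem_singleton] at this
      exact Or.inr this
  · rintro (rfl | rfl)
    · exact hvS.2
    · exact hwS.2

lemma part2 (hbip : IsCompleteBipartiteOn G S) (x : Fin N → Fin 2) :
    graphState G x = wOn S x * wOn Sᶜ x := by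
  by_cases hx : ∃ v ∈ S, ∃ w ∈ Sᶜ, x = indic s(v,w)
  · obtain ⟨v, hv, w, hw, rfl⟩ := hx
    have he : s(v,w) ∈ G.edgeFinset := (mem_edgeFinset_iff hbip).mpr ⟨v, hv, w, hw, rfl⟩
    rw [graphState_indic _ he]
    obtain ⟨hf1, hf2⟩ := filter_eq_singleton hv hw rfl
    rw [wOn, wOn]
    simp only [hf1, hf2, Finset.card_singleton]
    rw [card_edges hbip, Nat.cast_mul, Real.sqrt_mul (Nat.cast_nonneg _),
      Complex.ofReal_mul, mul_inv]
    simp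
  · have h0 : graphState G x = 0 := graphState_eq_zero G (fun e he hxe => by
      obtain ⟨v, hv, w, hw, rfl⟩ := (mem_edgeFinset_iff hbip).mp he
      exact hx ⟨v, hv, w, hw, hxe⟩)
    rw [h0]
    by_cases h1 : (S.filter (fun i => x i = 1)).card = 1
    · by_cases h2 : ((Sᶜ).filter (fun i => x i = 1)).card = 1
      · exact absurd (exists_of_cards h1 h2) hx
      · simp only [wOn, if_neg h2, mul_zero]
    · simp only [wOn, if_neg h1, zero_mul]

lemma three_ones {x : Fin N → Fin 2} {e : Sym2 (Fin N)} (hx : x = indic e)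
    {p q r : Fin N} (hpq : p ≠ q) (hpr : p ≠ r) (hqr : q ≠ r)
    (h1 : x p = 1) (h2 : x q = 1) (h3 : x r = 1) : False := by
  rw [eq_indic_iff] at hx
  induction e using Sym2.ind with
  | _ a b =>
    have hp := (hx p).mp h1
    have hq := (hx q).mp h2
    have hr := (hx r).mp h3
    simp only [Sym2.mem_iff] at hp hq hr
    rcases hp with rfl | rfl <;> rcases hq with rfl | rfl <;> rcases hr with rfl | rfl <;>
      simp_all


lemma forward (hconn : G.Connected) (hSne : S.Nonempty) (hSuniv : S ≠ Finset.univ)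
    (hfac : FactorizesAcross (graphState G) S) : IsCompleteBipartiteOn G S := by
  obtain ⟨φ₁, φ₂, hφ₁, hφ₂, hprod⟩ := hfac
  obtain ⟨a, ha⟩ := hSne
  obtain ⟨b, hb⟩ : (Sᶜ).Nonempty := Finset.nonempty_iff_ne_empty.mpr (by simpa using hSuniv)
  have hb' : b ∉ S := Finset.mem_compl.mp hb
  -- a cross edge
  obtain ⟨p⟩ := hconn.preconnected a b
  obtain ⟨d, _, hd1, hd2⟩ := p.exists_boundary_dart (↑S : Set (Fin N)) (Finset.mem_coe.mpr ha)
    (fun h => hb' (Finset.mem_coe.mp h))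
  set a₀ := d.fst with ha₀
  set b₀ := d.snd with hb₀
  have ha₀S : a₀ ∈ S := Finset.mem_coe.mp hd1
  have hb₀S : b₀ ∉ S := fun h => hd2 (Finset.mem_coe.mpr h)
  have hab₀ : G.Adj a₀ b₀ := d.adj
  have hcrossE : s(a₀, b₀) ∈ G.edgeFinset := SimpleGraph.mem_edgeFinset.mpr hab₀
  have hc : ((Real.sqrt G.edgeFinset.card : ℂ))⁻¹ ≠ 0 := sqrt_inv_ne_zero G ⟨_, hcrossE⟩
  -- for any edge e, φ₁(indic e) * φ₂(indic e) ≠ 0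
  have hψ : ∀ e ∈ G.edgeFinset, φ₁ (indic e) * φ₂ (indic e) ≠ 0 := by
    intro e he
    rw [← hprod]
    rw [graphState_indic _ he]
    exact hc
  -- every vertex has a neighbor
  have hnb : ∀ v : Fin N, ∃ w, G.Adj v w := by
    intro v
    have hex : ∃ u, u ≠ v := by
      by_cases h : a₀ = v
      · exact ⟨b₀, fun hbv => hb₀S (by rw [hbv, ← h]; exact ha₀S)⟩
      · exact ⟨a₀, h⟩
    obtain ⟨u, hu⟩ := hex
    obtain ⟨p'⟩ := hconn.preconnected v u
    cases p' with
    | nil => exact absurd rfl hu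
    | cons h _ => exact ⟨_, h⟩
  -- no edge inside S
  have noInS : ∀ u u', u ∈ S → u' ∈ S → ¬ G.Adj u u' := by
    intro u u' hu hu' hadj
    have huu' : u ≠ u' := G.ne_of_adj hadj
    have he1 : s(u, u') ∈ G.edgeFinset := SimpleGraph.mem_edgeFinset.mpr hadj
    have h1 : φ₁ (indic s(u, u')) ≠ 0 := left_ne_zero_of_mul (hψ _ he1)
    have h2 : φ₂ (indic s(a₀, b₀)) ≠ 0 := right_ne_zero_of_mul (hψ _ hcrossE)
    set z : Fin N → Fin 2 := fun i => if i ∈ S then indic s(u, u') i else indic s(a₀, b₀) i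
      with hzdef
    have hz1 : φ₁ z = φ₁ (indic s(u, u')) := hφ₁ _ _ (fun i hi => by simp [hzdef, if_pos hi])
    have hz2 : φ₂ z = φ₂ (indic s(a₀, b₀)) := hφ₂ _ _ (fun i hi => by simp [hzdef, if_neg hi])
    have hzne : graphState G z ≠ 0 := by
      rw [hprod, hz1, hz2]; exact mul_ne_zero h1 h2
    obtain ⟨e, _, hze⟩ := exists_of_ne_zero G hzne
    have hzu : z u = 1 := by
      rw [hzdef]; simp only [if_pos hu]
      exact indic_eq_one_iff.mpr (by simp [Sym2.mem_iff])
    have hzu' : z u' = 1 := by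
      rw [hzdef]; simp only [if_pos hu']
      exact indic_eq_one_iff.mpr (by simp [Sym2.mem_iff])
    have hzb : z b₀ = 1 := by
      rw [hzdef]; simp only [if_neg hb₀S]
      exact indic_eq_one_iff.mpr (by simp [Sym2.mem_iff])
    exact three_ones hze huu' (fun h => hb₀S (by rw [← h]; exact hu)) (fun h => hb₀S (by rw [← h]; exact hu')) hzu hzu' hzb
  -- no edge inside Sᶜ
  have noInSc : ∀ u u', u ∉ S → u' ∉ S → ¬ G.Adj u u' := by
    intro u u' hu hu' hadj
    have huu' : u ≠ u' := G.ne_of_adj hadj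
    have he1 : s(u, u') ∈ G.edgeFinset := SimpleGraph.mem_edgeFinset.mpr hadj
    have h1 : φ₂ (indic s(u, u')) ≠ 0 := right_ne_zero_of_mul (hψ _ he1)
    have h2 : φ₁ (indic s(a₀, b₀)) ≠ 0 := left_ne_zero_of_mul (hψ _ hcrossE)
    set z : Fin N → Fin 2 := fun i => if i ∈ S then indic s(a₀, b₀) i else indic s(u, u') i
      with hzdef
    have hz1 : φ₁ z = φ₁ (indic s(a₀, b₀)) := hφ₁ _ _ (fun i hi => by simp [hzdef, if_pos hi])
    have hz2 : φ₂ z = φ₂ (indic s(u, u')) := hφ₂ _ _ (fun i hi => by simp [hzdef, if_neg hi])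
    have hzne : graphState G z ≠ 0 := by
      rw [hprod, hz1, hz2]; exact mul_ne_zero h2 h1
    obtain ⟨e, _, hze⟩ := exists_of_ne_zero G hzne
    have hzu : z u = 1 := by
      rw [hzdef]; simp only [if_neg hu]
      exact indic_eq_one_iff.mpr (by simp [Sym2.mem_iff])
    have hzu' : z u' = 1 := by
      rw [hzdef]; simp only [if_neg hu']
      exact indic_eq_one_iff.mpr (by simp [Sym2.mem_iff])
    have hza : z a₀ = 1 := by
      rw [hzdef]; simp only [if_pos ha₀S]
      exact indic_eq_one_iff.mpr (by simp [Sym2.mem_iff])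
    exact three_ones hze huu' (fun h => hu (by rw [h]; exact ha₀S)) (fun h => hu' (by rw [h]; exact ha₀S)) hzu hzu' hza
  -- all cross pairs are adjacent
  have hcross : ∀ v ∈ S, ∀ w, w ∉ S → G.Adj v w := by
    intro v hv w hw
    obtain ⟨v', hvv'⟩ := hnb v
    have hv'c : v' ∉ S := fun h => noInS v v' hv h hvv'
    obtain ⟨w', hww'⟩ := hnb w
    have hw'S : w' ∈ S := by
      by_contra h
      exact noInSc w w' hw h hww'
    have e1 : s(v, v') ∈ G.edgeFinset := SimpleGraph.mem_edgeFinset.mpr hvv'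
    have e2 : s(w', w) ∈ G.edgeFinset := SimpleGraph.mem_edgeFinset.mpr (hww'.symm)
    have h1 : φ₁ (indic s(v, v')) ≠ 0 := left_ne_zero_of_mul (hψ _ e1)
    have h2 : φ₂ (indic s(w', w)) ≠ 0 := right_ne_zero_of_mul (hψ _ e2)
    have ha1 : φ₁ (indic s(v, w)) = φ₁ (indic s(v, v')) := by
      apply hφ₁
      intro i hi
      have hiw : i ≠ w := fun h => hw (h ▸ hi)
      have hiv' : i ≠ v' := fun h => hv'c (h ▸ hi)
      simp only [indic, Sym2.mem_iff]
      by_cases hiv : i = v <;> simp [hiv, hiw, hiv']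
    have ha2 : φ₂ (indic s(v, w)) = φ₂ (indic s(w', w)) := by
      apply hφ₂
      intro i hi
      have hiv : i ≠ v := fun h => hi (h ▸ hv)
      have hiw' : i ≠ w' := fun h => hi (h ▸ hw'S)
      simp only [indic, Sym2.mem_iff]
      by_cases hiw : i = w <;> simp [hiw, hiv, hiw']
    have hne : graphState G (indic s(v, w)) ≠ 0 := by
      rw [hprod, ha1, ha2]
      exact mul_ne_zero h1 h2
    obtain ⟨e, he, hxe⟩ := exists_of_ne_zero G hne
    have : s(v, w) = e := indic_inj hxe
    rw [← this] at he
    exact SimpleGraph.mem_edgeFinset.mp he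
  intro v w
  constructor
  · intro hadj
    by_cases hvS : v ∈ S <;> by_cases hwS : w ∈ S
    · exact absurd hadj (noInS v w hvS hwS)
    · exact Or.inl ⟨hvS, hwS⟩
    · exact Or.inr ⟨hvS, hwS⟩
    · exact absurd hadj (noInSc v w hvS hwS)
  · rintro (⟨hv, hw⟩ | ⟨hv, hw⟩)
    · exact hcross v hv w hw
    · exact (hcross w hw v hv).symm

end Stmt7Aux

/-- The excitation-state of a connected graph is separable across some
(nontrivial) bipartition of its vertices iff the graph is a complete bipartite
graph `K_{V₁,V₂}`; and in that case `|G⟩ = |W⟩_{V₁} ⊗ |W⟩_{V₂}` is a tensor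
product of two `W` states. -/
theorem stmt7 {N : ℕ} (G : SimpleGraph (Fin N)) [DecidableRel G.Adj]
    (hconn : G.Connected) :
    ((∃ S : Finset (Fin N), S.Nonempty ∧ S ≠ Finset.univ ∧
        FactorizesAcross (graphState G) S) ↔
      (∃ S : Finset (Fin N), S.Nonempty ∧ S ≠ Finset.univ ∧
        IsCompleteBipartiteOn G S)) ∧
    (∀ S : Finset (Fin N), IsCompleteBipartiteOn G S →
      ∀ x, graphState G x = wOn S x * wOn Sᶜ x) := by
  constructor
  · constructor
    · rintro ⟨S, hSne, hSuniv, hfac⟩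
      exact ⟨S, hSne, hSuniv, Stmt7Aux.forward hconn hSne hSuniv hfac⟩
    · rintro ⟨S, hSne, hSuniv, hbip⟩
      refine ⟨S, hSne, hSuniv, wOn S, wOn Sᶜ, ?_, ?_, fun x => Stmt7Aux.part2 hbip x⟩
      · intro x y hxy
        unfold wOn
        rw [Finset.filter_congr (fun i hi => by rw [hxy i hi])]
      · intro x y hxy
        unfold wOn
        rw [Finset.filter_congr (fun i hi => by rw [hxy i (Finset.mem_compl.mp hi)])]
  · intro S hbip x
    exact Stmt7Aux.part2 hbip x
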